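/- Let G be a finite group, N a normal subgroup of G, and x ∈ N. Suppose that the index [G : N·C_G(x)] is odd and that x is real in G (conjugate in G to x⁻¹). Then x is real in N, i.e. x is conjugate in N to x⁻¹. -/

import Mathlib

/-- If `N ⊴ G`, `x ∈ N`, the index `[G : N·C_G(x)]` is odd, and `x` is real in `G`,
then `x` is real in `N`. -/
theorem real_in_normal_subgroup_of_odd_index
    (G : Type*) [Group G] [Fintype G] (N : Subgroup G) [N.Normal] (x : G)
    (hx : x ∈ N) (hodd : Odd ((N ⊔ Subgroup.centralizer {x}).index))
    (hreal : ∃ g : G, g * x * g⁻¹ = x⁻¹) :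
    ∃ n ∈ N, n * x * n⁻¹ = x⁻¹ := by
  obtain ⟨g, hg⟩ := hreal
  set H := N ⊔ Subgroup.centralizer {x} with hH
  -- conjugating x⁻¹ instead of x
  have inv_conj : ∀ a : G, a * x * a⁻¹ = x⁻¹ → a * x⁻¹ * a⁻¹ = x := by
    intro a ha
    calc a * x⁻¹ * a⁻¹ = (a * x * a⁻¹)⁻¹ := by group
      _ = x := by rw [ha]; group
  have inv_side : ∀ a : G, a * x * a⁻¹ = x⁻¹ → a⁻¹ * x * a = x⁻¹ := by
    intro a ha
    calc a⁻¹ * x * a = a⁻¹ * (a * x⁻¹ * a⁻¹) * a := by rw [inv_conj a ha]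
      _ = x⁻¹ := by group
  -- it suffices to show g ∈ H
  suffices hgH : g ∈ H by
    have hmem : (g : G) ∈ (↑H : Set G) := hgH
    rw [hH, Subgroup.normal_mul] at hmem
    obtain ⟨n, hn, c, hc, hnc⟩ := hmem
    have hnc' : n * c = g := hnc
    refine ⟨n, hn, ?_⟩
    have hcx : x * c = c * x := Subgroup.mem_centralizer_iff.mp hc x rfl
    have hcxc : c * x * c⁻¹ = x := by rw [← hcx]; group
    calc n * x * n⁻¹ = n * (c * x * c⁻¹) * n⁻¹ := by rw [hcxc]
      _ = (n * c) * x * (n * c)⁻¹ := by group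
      _ = g * x * g⁻¹ := by rw [hnc']
      _ = x⁻¹ := hg
  -- conjugation by any a with a*x*a⁻¹ = x⁻¹ preserves H
  have key : ∀ a : G, a * x * a⁻¹ = x⁻¹ → ∀ h ∈ H, a * h * a⁻¹ ∈ H := by
    intro a ha h hh
    have ha' : a⁻¹ * x * a = x⁻¹ := inv_side a ha
    have ha'' : a * x⁻¹ * a⁻¹ = x := inv_conj a ha
    have hmem : (h : G) ∈ (↑H : Set G) := hh
    rw [hH, Subgroup.normal_mul] at hmem
    obtain ⟨n, hn, c, hc, hnc⟩ := hmem
    have hnc' : n * c = h := hnc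
    have h1 : a * n * a⁻¹ ∈ N := Subgroup.Normal.conj_mem ‹N.Normal› n hn a
    have hcx : x * c = c * x := Subgroup.mem_centralizer_iff.mp hc x rfl
    have hcx' : x⁻¹ * c = c * x⁻¹ := (Commute.inv_left hcx).eq
    have h2 : a * c * a⁻¹ ∈ Subgroup.centralizer {x} := by
      rw [Subgroup.mem_centralizer_iff]
      intro y hy
      have hy' : y = x := hy
      subst hy'
      calc y * (a * c * a⁻¹) = a * (a⁻¹ * y * a) * c * a⁻¹ := by group
        _ = a * y⁻¹ * c * a⁻¹ := by rw [ha']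
        _ = a * (y⁻¹ * c) * a⁻¹ := by group
        _ = a * (c * y⁻¹) * a⁻¹ := by rw [hcx']
        _ = (a * c * a⁻¹) * (a * y⁻¹ * a⁻¹) := by group
        _ = (a * c * a⁻¹) * y := by rw [ha'']
    have hsplit : a * h * a⁻¹ = (a * n * a⁻¹) * (a * c * a⁻¹) := by
      rw [← hnc']; group
    rw [hsplit]
    exact mul_mem (Subgroup.mem_sup_left h1) (Subgroup.mem_sup_right h2)
  -- hence g normalizes H
  have hg' : g⁻¹ * x * g = x⁻¹ := inv_side g hg
  have hg'' : g⁻¹ * x * (g⁻¹)⁻¹ = x⁻¹ := by rw [inv_inv]; exact hg'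
  have hgnorm : g ∈ Subgroup.normalizer (H : Set G) := by
    rw [Subgroup.mem_normalizer_iff]
    intro h
    constructor
    · exact key g hg h
    · intro hh
      have := key g⁻¹ hg'' _ hh
      simpa [mul_assoc] using this
  -- work in the quotient of the normalizer
  set M := Subgroup.normalizer (H : Set G) with hM
  have hHM : H ≤ M := Subgroup.le_normalizer
  set g' : M := ⟨g, hgnorm⟩ with hg'def
  set t : M ⧸ (H.subgroupOf M) := QuotientGroup.mk g' with ht
  have hg2 : g * g ∈ H := by
    apply Subgroup.mem_sup_right
    rw [Subgroup.mem_centralizer_iff]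
    intro y hy
    have hy' : y = x := hy
    subst hy'
    have hconj : (g * g) * y * (g * g)⁻¹ = y := by
      calc (g * g) * y * (g * g)⁻¹ = g * (g * y * g⁻¹) * g⁻¹ := by group
        _ = g * y⁻¹ * g⁻¹ := by rw [hg]
        _ = y := inv_conj g hg
    calc y * (g * g) = ((g * g) * y * (g * g)⁻¹) * (g * g) := by rw [hconj]
      _ = (g * g) * y := by group
  have ht2 : t ^ 2 = 1 := by
    rw [ht, ← QuotientGroup.mk_pow, QuotientGroup.eq_one_iff]
    rw [Subgroup.mem_subgroupOf]
    have hval : ((g' ^ 2 : M) : G) = g * g := by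
      rw [hg'def]; push_cast [pow_two]; rfl
    show ((g' ^ 2 : M) : G) ∈ H
    rw [hval]; exact hg2
  -- t = 1 forced by oddness
  have htone : t = 1 := by
    by_contra hne
    have hdvd : orderOf t ∣ 2 := orderOf_dvd_of_pow_eq_one ht2
    have h2 : orderOf t = 2 := by
      rcases (Nat.dvd_prime Nat.prime_two).mp hdvd with h | h
      · exact absurd (orderOf_eq_one_iff.mp h) hne
      · exact h
    have hcard : orderOf t ∣ Nat.card (M ⧸ (H.subgroupOf M)) := orderOf_dvd_natCard t
    have hrel : Nat.card (M ⧸ (H.subgroupOf M)) = H.relIndex M := rfl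
    have hdvd2 : (2 : ℕ) ∣ H.index := by
      have hrd := H.relIndex_dvd_index_of_le hHM
      rw [← hrel] at hrd
      exact dvd_trans (h2 ▸ hcard) hrd
    rw [← Nat.not_even_iff_odd] at hodd
    exact hodd ((even_iff_two_dvd).mpr hdvd2)
  rw [ht, QuotientGroup.eq_one_iff, Subgroup.mem_subgroupOf] at htone
  exact htone
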